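/- Let p be an odd prime, and let r, t be non-negative integers with r ≥ t and r - t even such that r_0 and t_0 have different parities and r_0 + t_0 ≤ p - 4 (where n_i denotes the i-th base-p digit of n). If (N, σ, δ, I) is an admissible quadruple for the pair (r, t) with N ≥ 1, then 0 ∉ I, σ_0 = t_0 + 1, and δ_0 = (r_0 - t_0 + p)/2. -/
import Mathlib


/-- The `i`-th digit of the base-`p` expansion of `n`. -/
def digit (p n i : ℕ) : ℕ := n / p ^ i % p

/-- `σ_I = ∑_{i ∈ I} p^i σ_i`. -/
def digitSum (p σ : ℕ) (I : Finset ℕ) : ℕ := ∑ i ∈ I, p ^ i * digit p σ i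

/-- An admissible triple `(N, σ, δ)`. -/
def AdmissibleTriple (p N σ δ : ℕ) : Prop :=
  σ < p ^ (N + 1) - p ^ N ∧ δ < p ^ (N + 1) - p ^ N ∧
  (∀ i < N, digit p σ i + digit p δ i ≤ p - 1) ∧
  digit p σ N + digit p δ N < p - 1

/-- An admissible quadruple `(N, σ, δ, I)`. -/
def AdmissibleQuadruple (p N σ δ : ℕ) (I : Finset ℕ) : Prop :=
  AdmissibleTriple p N σ δ ∧ ∀ i ∈ I, digit p σ i ≠ 0 ∧ i ≠ N

/-- An admissible quadruple for the pair `(r, t)`. -/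
def AdmissibleQuadrupleFor (p r t N σ δ : ℕ) (I : Finset ℕ) : Prop :=
  AdmissibleQuadruple p N σ δ I ∧
  t + 2 * digitSum p σ I = p ^ N - 1 + σ ∧
  r ≡ p ^ N - 1 + σ + 2 * δ [MOD 2 * p ^ (N + 1)]

lemma mod_cases_aux {p a b : ℕ} (hp : 0 < p) (ha : a < 4 * p) (hb : b < 4 * p)
    (h : a ≡ b [MOD p]) :
    a = b ∨ a = b + p ∨ a = b + 2 * p ∨ a = b + 3 * p ∨
      b = a + p ∨ b = a + 2 * p ∨ b = a + 3 * p := by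
  have h' : a % p = b % p := h
  obtain ⟨qa, h1, e1⟩ : ∃ q, q < 4 ∧ a = a % p + p * q :=
    ⟨a / p, Nat.div_lt_of_lt_mul (by omega), (Nat.mod_add_div a p).symm⟩
  obtain ⟨qb, h2, e2⟩ : ∃ q, q < 4 ∧ b = b % p + p * q :=
    ⟨b / p, Nat.div_lt_of_lt_mul (by omega), (Nat.mod_add_div b p).symm⟩
  interval_cases qa <;> interval_cases qb <;> omega

lemma digitSum_modEq (p σ : ℕ) (I : Finset ℕ) :
    digitSum p σ I ≡ (if 0 ∈ I then σ % p else 0) [MOD p] := by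
  classical
  by_cases h0 : 0 ∈ I
  · rw [if_pos h0, digitSum, ← Finset.add_sum_erase I _ h0]
    have h1 : p ^ 0 * digit p σ 0 = σ % p := by simp [digit]
    rw [h1]
    have h2 : (∑ i ∈ I.erase 0, p ^ i * digit p σ i) ≡ 0 [MOD p] :=
      Nat.modEq_zero_iff_dvd.mpr <| Finset.dvd_sum fun i hi =>
        dvd_mul_of_dvd_left (dvd_pow_self p (Finset.ne_of_mem_erase hi)) _
    simpa using Nat.ModEq.add_left (σ % p) h2
  · rw [if_neg h0, digitSum]
    exact Nat.modEq_zero_iff_dvd.mpr <| Finset.dvd_sum fun i hi =>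
      dvd_mul_of_dvd_left (dvd_pow_self p (fun hieq => h0 (hieq ▸ hi))) _

theorem stmt_15 (p : ℕ) (hp : p.Prime) (hodd : Odd p) (r t : ℕ) (hrt : t ≤ r)
    (hev : Even (r - t)) (hpar : digit p r 0 % 2 ≠ digit p t 0 % 2)
    (hsum : digit p r 0 + digit p t 0 ≤ p - 4)
    (N σ δ : ℕ) (I : Finset ℕ)
    (h : AdmissibleQuadrupleFor p r t N σ δ I) (hN : 1 ≤ N) :
    0 ∉ I ∧ digit p σ 0 = digit p t 0 + 1 ∧
      2 * digit p δ 0 + digit p t 0 = digit p r 0 + p := by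
  have hp1 : 1 < p := hp.one_lt
  have hp0 : 0 < p := hp.pos
  have hdig : ∀ n : ℕ, digit p n 0 = n % p := fun n => by simp [digit]
  obtain ⟨⟨⟨hσlt, hδlt, hsd, hsdN⟩, hI⟩, hE1, hE2⟩ := h
  have hσδ0 : σ % p + δ % p ≤ p - 1 := by
    have := hsd 0 hN; rwa [hdig, hdig] at this
  have podd : p % 2 = 1 := Nat.odd_iff.mp hodd
  have hr0 : r % p < p := Nat.mod_lt _ hp0
  have ht0 : t % p < p := Nat.mod_lt _ hp0
  have hs0 : σ % p < p := Nat.mod_lt _ hp0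
  have hd0 : δ % p < p := Nat.mod_lt _ hp0
  have hpN : p ≤ p ^ N := by
    calc p = p ^ 1 := (pow_one p).symm
      _ ≤ p ^ N := Nat.pow_le_pow_right hp0 hN
  have hB : p ^ N - 1 + σ ≡ p - 1 + σ % p [MOD p] := by
    have hdvd : p ∣ p ^ N - p := Nat.dvd_sub (dvd_pow_self p (by omega)) dvd_rfl
    have hrw : p ^ N - 1 + σ = p - 1 + σ + (p ^ N - p) := by omega
    rw [hrw]
    calc p - 1 + σ + (p ^ N - p) ≡ p - 1 + σ + 0 [MOD p] :=
          Nat.ModEq.add_left _ (Nat.modEq_zero_iff_dvd.mpr hdvd)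
      _ = p - 1 + σ := by omega
      _ ≡ p - 1 + σ % p [MOD p] := Nat.ModEq.add_left _ (Nat.mod_modEq σ p).symm
  have key1 : t % p + 2 * (if 0 ∈ I then σ % p else 0) ≡ p - 1 + σ % p [MOD p] := by
    calc t % p + 2 * (if 0 ∈ I then σ % p else 0)
        ≡ t + 2 * digitSum p σ I [MOD p] :=
          (Nat.mod_modEq t p).add ((digitSum_modEq p σ I).symm.mul_left 2)
      _ = p ^ N - 1 + σ := hE1
      _ ≡ p - 1 + σ % p [MOD p] := hB
  have key2 : r % p ≡ p - 1 + σ % p + 2 * (δ % p) [MOD p] := by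
    have hdvd : p ∣ 2 * p ^ (N + 1) := ⟨2 * p ^ N, by ring⟩
    calc r % p ≡ r [MOD p] := Nat.mod_modEq r p
      _ ≡ p ^ N - 1 + σ + 2 * δ [MOD p] := Nat.ModEq.of_dvd hdvd hE2
      _ ≡ p - 1 + σ % p + 2 * (δ % p) [MOD p] :=
          hB.add ((Nat.mod_modEq δ p).symm.mul_left 2)
  rw [hdig, hdig] at hpar
  rw [hdig, hdig] at hsum
  have c2 := mod_cases_aux hp0 (by omega) (by omega) key2
  by_cases h0 : 0 ∈ I
  · exfalso
    rw [if_pos h0] at key1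
    have c1 := mod_cases_aux hp0 (by omega) (by omega) key1
    omega
  · rw [if_neg h0] at key1
    have c1 := mod_cases_aux hp0 (by omega) (by omega) key1
    simp only [hdig]
    exact ⟨h0, by omega, by omega⟩
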